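/- Let A = M − N be a splitting of A ∈ ℝ^{n×n}, let b ∈ ℝⁿ, θ ∈ [0,1), and let Ω ∈ ℝ^{n×n} be such that Ω + M is invertible. Suppose x* satisfies the absolute value equation Ax* − |x*| − b = 0 and ‖(Ω+M)^{-1}‖ < 1/[θ(‖Ω+M‖ + ‖Ω+N‖ + 1) + ‖Ω+N‖ + 1]. Then any sequence {x^k} in ℝⁿ satisfying ‖(Ω+M)x^{k+1} − [(Ω+N)x^k + |x^k| + b]‖ ≤ θ‖Ax^k − |x^k| − b‖ for all k ≥ 0 converges linearly to x* from any starting point x^0. -/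

import Mathlib

open Matrix Filter

/-- Componentwise absolute value of a vector in Euclidean space. -/
noncomputable def vabs {n : ℕ} (x : EuclideanSpace ℝ (Fin n)) : EuclideanSpace ℝ (Fin n) :=
  WithLp.toLp 2 (fun i => |x i|)

/-- A matrix acting on Euclidean space (so that vector norms are the Euclidean 2-norm). -/
noncomputable def mulV {n : ℕ} (M : Matrix (Fin n) (Fin n) ℝ) (x : EuclideanSpace ℝ (Fin n)) :
    EuclideanSpace ℝ (Fin n) :=
  Matrix.toEuclideanCLM (𝕜 := ℝ) M x

/-- Spectral norm of a real matrix: the operator norm induced by the Euclidean vector norm. -/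
noncomputable def spec {n : ℕ} (M : Matrix (Fin n) (Fin n) ℝ) : ℝ :=
  ‖Matrix.toEuclideanCLM (𝕜 := ℝ) M‖

/-- The GAVE residual function `F(x) = A x − B |x| − b`. -/
noncomputable def gaveF {n : ℕ} (A B : Matrix (Fin n) (Fin n) ℝ)
    (b : EuclideanSpace ℝ (Fin n)) (x : EuclideanSpace ℝ (Fin n)) : EuclideanSpace ℝ (Fin n) :=
  mulV A x - mulV B (vabs x) - b

/-- The AVE residual function `A x − |x| − b` (the GAVE with `B = I`). -/
noncomputable def aveF {n : ℕ} (A : Matrix (Fin n) (Fin n) ℝ)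
    (b : EuclideanSpace ℝ (Fin n)) (x : EuclideanSpace ℝ (Fin n)) : EuclideanSpace ℝ (Fin n) :=
  mulV A x - vabs x - b

/-- A sequence converges linearly to `xs`: the distances to `xs` contract by a fixed
factor `c < 1` at every step, and the sequence tends to `xs`. -/
def ConvergesLinearlyTo {n : ℕ} (x : ℕ → EuclideanSpace ℝ (Fin n))
    (xs : EuclideanSpace ℝ (Fin n)) : Prop :=
  (∃ c : ℝ, 0 ≤ c ∧ c < 1 ∧ ∀ k : ℕ, ‖x (k + 1) - xs‖ ≤ c * ‖x k - xs‖) ∧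
    Tendsto x atTop (nhds xs)

lemma vabs_lip {n : ℕ} (x y : EuclideanSpace ℝ (Fin n)) : ‖vabs x - vabs y‖ ≤ ‖x - y‖ := by
  rw [EuclideanSpace.norm_eq, EuclideanSpace.norm_eq]
  apply Real.sqrt_le_sqrt
  apply Finset.sum_le_sum
  intro i _
  have h1 : ‖(vabs x - vabs y) i‖ ≤ ‖(x - y) i‖ := by
    simp only [vabs, PiLp.sub_apply, PiLp.toLp_apply, Real.norm_eq_abs]
    exact abs_abs_sub_abs_le_abs_sub _ _
  exact pow_le_pow_left₀ (norm_nonneg _) h1 2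

lemma mulV_le {n : ℕ} (M : Matrix (Fin n) (Fin n) ℝ) (v : EuclideanSpace ℝ (Fin n)) :
    ‖mulV M v‖ ≤ spec M * ‖v‖ :=
  (Matrix.toEuclideanCLM (𝕜 := ℝ) M).le_opNorm v

lemma mulV_sub {n : ℕ} (M : Matrix (Fin n) (Fin n) ℝ) (a c : EuclideanSpace ℝ (Fin n)) :
    mulV M (a - c) = mulV M a - mulV M c := by
  simp [mulV]

lemma mulV_matsub {n : ℕ} (M N : Matrix (Fin n) (Fin n) ℝ) (a : EuclideanSpace ℝ (Fin n)) :
    mulV (M - N) a = mulV M a - mulV N a := by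
  simp [mulV]

theorem stmt9 {n : ℕ} (A M N Ω : Matrix (Fin n) (Fin n) ℝ)
    (b : EuclideanSpace ℝ (Fin n)) (hA : A = M - N) (θ : ℝ) (hθ0 : 0 ≤ θ) (hθ1 : θ < 1)
    (hinv : IsUnit (Ω + M))
    (xs : EuclideanSpace ℝ (Fin n)) (hxs : aveF A b xs = 0)
    (hcond : spec (Ω + M)⁻¹ <
      1 / (θ * (spec (Ω + M) + spec (Ω + N) + 1) + spec (Ω + N) + 1))
    (x : ℕ → EuclideanSpace ℝ (Fin n))
    (hx : ∀ k : ℕ, ‖mulV (Ω + M) (x (k + 1)) - (mulV (Ω + N) (x k) + vabs (x k) + b)‖ ≤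
      θ * ‖aveF A b (x k)‖) :
    ConvergesLinearlyTo x xs := by
  set P := Ω + M with hP
  set Q := Ω + N with hQ
  have hPQ : A = P - Q := by rw [hA, hP, hQ]; abel
  have hdetP : IsUnit P.det := (Matrix.isUnit_iff_isUnit_det P).mp hinv
  have hinvP : ∀ v : EuclideanSpace ℝ (Fin n), mulV P⁻¹ (mulV P v) = v := by
    intro v
    have h1 : mulV (P⁻¹ * P) v = mulV P⁻¹ (mulV P v) := by
      simp [mulV, _root_.map_mul]
    rw [← h1, Matrix.nonsing_inv_mul P hdetP]
    simp [mulV, _root_.map_one]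
  set D := θ * (spec P + spec Q + 1) + spec Q + 1 with hD
  have hQ0 : (0:ℝ) ≤ spec Q := norm_nonneg _
  have hP0 : (0:ℝ) ≤ spec P := norm_nonneg _
  have hD_pos : 0 < D := by
    have h : 0 ≤ θ * (spec P + spec Q + 1) := by positivity
    rw [hD]; linarith
  set c := spec P⁻¹ * D with hc
  have hc0 : 0 ≤ c := mul_nonneg (norm_nonneg _) hD_pos.le
  have hc1 : c < 1 := by
    rw [hc]
    rw [lt_div_iff₀ hD_pos] at hcond
    linarith
  -- the fixed point identity
  have hAxs : mulV A xs = vabs xs + b := by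
    have h0 := hxs
    rw [aveF] at h0
    have h3 : mulV A xs - (vabs xs + b) = 0 := by rw [← h0]; abel
    exact sub_eq_zero.mp h3
  have hfix : mulV P xs = mulV Q xs + vabs xs + b := by
    have h1 : mulV P xs - mulV Q xs = vabs xs + b := by
      rw [← mulV_matsub, ← hPQ, hAxs]
    have h3 : mulV P xs - (mulV Q xs + vabs xs + b) = 0 := by
      rw [← sub_eq_zero] at h1
      rw [← h1]; abel
    exact sub_eq_zero.mp h3
  have key : ∀ k : ℕ, ‖x (k + 1) - xs‖ ≤ c * ‖x k - xs‖ := by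
    intro k
    have hid : mulV P (x (k + 1) - xs) =
        (mulV P (x (k + 1)) - (mulV Q (x k) + vabs (x k) + b)) +
          mulV Q (x k - xs) + (vabs (x k) - vabs xs) := by
      rw [mulV_sub, mulV_sub, hfix]; abel
    have hres : aveF A b (x k) = mulV A (x k - xs) - (vabs (x k) - vabs xs) := by
      rw [aveF, mulV_sub, hAxs]; abel
    have hresn : ‖aveF A b (x k)‖ ≤ (spec P + spec Q + 1) * ‖x k - xs‖ := by
      rw [hres]
      calc ‖mulV A (x k - xs) - (vabs (x k) - vabs xs)‖
          ≤ ‖mulV A (x k - xs)‖ + ‖vabs (x k) - vabs xs‖ := norm_sub_le _ _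
        _ ≤ spec A * ‖x k - xs‖ + ‖x k - xs‖ := by
            gcongr
            · exact mulV_le _ _
            · exact vabs_lip _ _
        _ ≤ (spec P + spec Q + 1) * ‖x k - xs‖ := by
            have hAle : spec A ≤ spec P + spec Q := by
              rw [hPQ]
              simp only [spec, map_sub]
              exact norm_sub_le _ _
            nlinarith [norm_nonneg (x k - xs)]
    have hstep : ‖mulV P (x (k + 1) - xs)‖ ≤ D * ‖x k - xs‖ := by
      calc ‖mulV P (x (k + 1) - xs)‖
          ≤ ‖mulV P (x (k + 1)) - (mulV Q (x k) + vabs (x k) + b)‖ +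
              ‖mulV Q (x k - xs)‖ + ‖vabs (x k) - vabs xs‖ := by
            rw [hid]; exact norm_add₃_le
        _ ≤ θ * ‖aveF A b (x k)‖ + spec Q * ‖x k - xs‖ + ‖x k - xs‖ := by
            gcongr
            · exact hx k
            · exact mulV_le _ _
            · exact vabs_lip _ _
        _ ≤ θ * ((spec P + spec Q + 1) * ‖x k - xs‖) + spec Q * ‖x k - xs‖ + ‖x k - xs‖ := by
            gcongr
        _ = D * ‖x k - xs‖ := by rw [hD]; ring
    calc ‖x (k + 1) - xs‖ = ‖mulV P⁻¹ (mulV P (x (k + 1) - xs))‖ := by rw [hinvP]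
      _ ≤ spec P⁻¹ * ‖mulV P (x (k + 1) - xs)‖ := mulV_le _ _
      _ ≤ spec P⁻¹ * (D * ‖x k - xs‖) :=
          mul_le_mul_of_nonneg_left hstep (norm_nonneg _)
      _ = c * ‖x k - xs‖ := by rw [hc]; ring
  refine ⟨⟨c, hc0, hc1, key⟩, ?_⟩
  have hbnd : ∀ k : ℕ, ‖x k - xs‖ ≤ c ^ k * ‖x 0 - xs‖ := by
    intro k
    induction k with
    | zero => simp
    | succ k ih =>
      calc ‖x (k + 1) - xs‖ ≤ c * ‖x k - xs‖ := key k
        _ ≤ c * (c ^ k * ‖x 0 - xs‖) := mul_le_mul_of_nonneg_left ih hc0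
        _ = c ^ (k + 1) * ‖x 0 - xs‖ := by ring
  have h0 : Tendsto (fun k : ℕ => c ^ k * ‖x 0 - xs‖) atTop (nhds 0) := by
    have ht := tendsto_pow_atTop_nhds_zero_of_lt_one hc0 hc1
    simpa using ht.mul_const ‖x 0 - xs‖
  have hnorm : Tendsto (fun k : ℕ => ‖x k - xs‖) atTop (nhds 0) :=
    squeeze_zero (fun k => norm_nonneg _) hbnd h0
  rw [tendsto_iff_norm_sub_tendsto_zero]
  exact hnorm
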